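/- arXiv:2008.03117 — 3 statements merged into one kernel-verified Lean document; each statement's English description precedes it below -/
import Mathlib

section
/- Let π be a set of primes and G a finite π'-soluble group. If M is a maximal element (with respect to inclusion) of the set of proper N^π-Dnormal subgroups of G, then the N^π-residual G^{N^π} is contained in M. -/
/-- A (finite) group is a `π`-group if every prime dividing its order lies in `π`. -/
def IsPiGroup (π : Set ℕ) (G : Type*) [Group G] : Prop :=
  ∀ p : ℕ, p.Prime → p ∣ Nat.card G → p ∈ π

/-- `O^π(G)`: the smallest normal subgroup of `G` whose quotient is a `π`-group
(recall that `N.index = Nat.card (G ⧸ N)`). -/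
def piResidual (π : Set ℕ) (G : Type*) [Group G] : Subgroup G :=
  ⨅ N ∈ {N : Subgroup G | N.Normal ∧ ∀ p : ℕ, p.Prime → p ∣ N.index → p ∈ π}, N

/-- `O_π(G)`: the largest normal `π`-subgroup of `G`. -/
def piCore (π : Set ℕ) (G : Type*) [Group G] : Subgroup G :=
  ⨆ N ∈ {N : Subgroup G | N.Normal ∧ IsPiGroup π N}, N

/-- `O^π(H)` for a subgroup `H ≤ G`, regarded as a subgroup of `G`. -/
def piResidualIn (π : Set ℕ) {G : Type*} [Group G] (H : Subgroup G) : Subgroup G :=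
  (piResidual π H).map H.subtype

/-- `H` is `N^π`-Dnormal in `G`: if `|π| ≤ 1` this means `H` is normal in `G`; if
`|π| ≥ 2` it means that `O^π(H)` is normal in `G` and `O^π(G)` normalizes `H`. -/
def IsDnormal (π : Set ℕ) {G : Type*} [Group G] (H : Subgroup G) : Prop :=
  (π.Subsingleton ∧ H.Normal) ∨
  (¬ π.Subsingleton ∧ (piResidualIn π H).Normal ∧ piResidual π G ≤ Subgroup.normalizer (H : Set G))

/-- `S` is `N^π`-Dsubnormal in `G`: there is a chain `S = S₀ ≤ S₁ ≤ ⋯ ≤ Sₙ = G`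
with each `Sᵢ` being `N^π`-Dnormal in `Sᵢ₊₁`. -/
def IsDsubnormal (π : Set ℕ) {G : Type*} [Group G] (S : Subgroup G) : Prop :=
  ∃ (n : ℕ) (c : Fin (n + 1) → Subgroup G), c 0 = S ∧ c (Fin.last n) = ⊤ ∧
    ∀ i : Fin n, c i.castSucc ≤ c i.succ ∧
      IsDnormal π ((c i.castSucc).subgroupOf (c i.succ))

/-- `H` is subnormal in `G`. -/
def IsSubnormal' {G : Type*} [Group G] (H : Subgroup G) : Prop :=
  ∃ (n : ℕ) (c : Fin (n + 1) → Subgroup G), c 0 = H ∧ c (Fin.last n) = ⊤ ∧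
    ∀ i : Fin n, c i.castSucc ≤ c i.succ ∧
      ((c i.castSucc).subgroupOf (c i.succ)).Normal

/-- The class `N^π`: groups that are the (internal) direct product of a `π`-group and a
nilpotent `π'`-group. -/
def IsNPiGroup (π : Set ℕ) (G : Type*) [Group G] : Prop :=
  ∃ H K : Subgroup G, H.Normal ∧ K.Normal ∧ H ⊓ K = ⊥ ∧ H ⊔ K = ⊤ ∧
    IsPiGroup π H ∧ IsPiGroup πᶜ K ∧ Group.IsNilpotent K

/-- The `N^π`-residual `G^{N^π}`: the smallest normal subgroup of `G` whose quotient
belongs to the class `N^π`. -/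
def nPiResidual (π : Set ℕ) (G : Type*) [Group G] : Subgroup G :=
  ⨅ N ∈ {N : Subgroup G | ∃ h : N.Normal, letI := h; IsNPiGroup π (G ⧸ N)}, N

/-- `G` is `π'`-soluble: it has a normal series each of whose factors is either a
`π`-group or a `p`-group for some prime `p ∉ π`. -/
def IsPiPrimeSoluble (π : Set ℕ) (G : Type*) [Group G] : Prop :=
  ∃ (n : ℕ) (c : Fin (n + 1) → Subgroup G), c 0 = ⊥ ∧ c (Fin.last n) = ⊤ ∧
    ∀ i : Fin n, c i.castSucc ≤ c i.succ ∧
      ((c i.castSucc).subgroupOf (c i.succ)).Normal ∧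
      ((∀ p : ℕ, p.Prime → p ∣ ((c i.castSucc).subgroupOf (c i.succ)).index → p ∈ π) ∨
        ∃ p : ℕ, p.Prime ∧ p ∉ π ∧
          ∃ k : ℕ, ((c i.castSucc).subgroupOf (c i.succ)).index = p ^ k)

/-- An `N^π`-Fitting set of `G`. -/
def IsNPiFittingSet (π : Set ℕ) {G : Type*} [Group G] (F : Set (Subgroup G)) : Prop :=
  F.Nonempty ∧
  (∀ S ∈ F, ∀ T : Subgroup G, T ≤ S → IsDsubnormal π (T.subgroupOf S) → T ∈ F) ∧
  (∀ S ∈ F, ∀ T ∈ F, IsDnormal π (S.subgroupOf (S ⊔ T)) →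
    IsDnormal π (T.subgroupOf (S ⊔ T)) → S ⊔ T ∈ F) ∧
  (∀ S ∈ F, ∀ x : G, S.map (MulAut.conj x).toMonoidHom ∈ F)

/-- The `F`-radical `H_F` of a subgroup `H` of `G`: the join of all subgroups of `H`
belonging to `F` that are normal in `H`. -/
def fittingRadical {G : Type*} [Group G] (F : Set (Subgroup G)) (H : Subgroup G) : Subgroup G :=
  ⨆ S ∈ {S : Subgroup G | S ∈ F ∧ S ≤ H ∧ (S.subgroupOf H).Normal}, S

/-- `M` is an `F`-maximal subgroup of `K`. -/
def IsFMaximalIn {G : Type*} [Group G] (F : Set (Subgroup G)) (M K : Subgroup G) : Prop :=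
  M ∈ F ∧ M ≤ K ∧ ∀ S ∈ F, S ≤ K → M ≤ S → S = M

/-- `V` is an `F`-injector of `G`. -/
def IsInjector {G : Type*} [Group G] (F : Set (Subgroup G)) (V : Subgroup G) : Prop :=
  ∀ K : Subgroup G, IsSubnormal' K → IsFMaximalIn F (V ⊓ K) K

/-- `V` is an `F`-injector of the subgroup `N` of `G`. -/
def IsInjectorIn {G : Type*} [Group G] (F : Set (Subgroup G)) (V N : Subgroup G) : Prop :=
  V ≤ N ∧ ∀ K : Subgroup G, K ≤ N → IsSubnormal' (K.subgroupOf N) → IsFMaximalIn F (V ⊓ K) K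

/-- `M` is an `N^π`-maximal subgroup of `X`. -/
def IsNPiMaximal (π : Set ℕ) {X : Type*} [Group X] (M : Subgroup X) : Prop :=
  IsNPiGroup π M ∧ ∀ M' : Subgroup X, IsNPiGroup π M' → M ≤ M' → M' = M

/-- `U` is an `N^π`-projector of `G`: `UK/K` is `N^π`-maximal in `G/K` for every
normal subgroup `K` of `G`. -/
def IsNPiProjector (π : Set ℕ) {G : Type*} [Group G] (U : Subgroup G) : Prop :=
  ∀ K : Subgroup G, ∀ hK : K.Normal,
    letI := hK
    IsNPiMaximal π ((U ⊔ K).map (QuotientGroup.mk' K))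

/-- An `N^π`-Fitting class of (finite) groups: a non-empty isomorphism-closed class
closed under `N^π`-Dnormal subgroups and under joins of pairs of `N^π`-Dnormal
subgroups. -/
def IsNPiFittingClass (π : Set ℕ) (F : (H : Type) → [_inst : Group H] → Prop) : Prop :=
  (∃ (H : Type) (g : Group H) (_ : Finite H), F H (_inst := g)) ∧
  (∀ (H K : Type) [Group H] [Group K] [Finite H] [Finite K],
    F H → Nonempty (H ≃* K) → F K) ∧
  (∀ (H : Type) [Group H] [Finite H] (N : Subgroup H),
    F H → IsDnormal π N → F ↥N) ∧
  (∀ (H : Type) [Group H] [Finite H] (M N : Subgroup H),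
    F ↥M → F ↥N → IsDnormal π M → IsDnormal π N → M ⊔ N = ⊤ → F H)


section AuxLemmas
variable {π : Set ℕ}

lemma isNPiGroup_of_pi {Q : Type*} [Group Q]
    (h : ∀ p : ℕ, p.Prime → p ∣ Nat.card Q → p ∈ π) : IsNPiGroup π Q := by
  refine ⟨⊤, ⊥, inferInstance, inferInstance, inf_bot_eq ⊤, sup_bot_eq ⊤, ?_, ?_, inferInstance⟩
  · intro p pp hd
    exact h p pp (by rwa [Nat.card_congr Subgroup.topEquiv.toEquiv] at hd)
  · intro p pp hd
    rw [Subgroup.card_bot] at hd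
    exact absurd (Nat.eq_one_of_dvd_one hd) pp.ne_one.elim

lemma isNPiGroup_of_pPow {Q : Type*} [Group Q] [Finite Q] {p k : ℕ} (hp : p.Prime)
    (hpπ : p ∉ π) (hcard : Nat.card Q = p ^ k) : IsNPiGroup π Q := by
  haveI : Fact p.Prime := ⟨hp⟩
  refine ⟨⊥, ⊤, inferInstance, inferInstance, bot_inf_eq ⊤, bot_sup_eq ⊤, ?_, ?_, ?_⟩
  · intro q qq hd
    rw [Subgroup.card_bot] at hd
    exact absurd (Nat.eq_one_of_dvd_one hd) qq.ne_one.elim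
  · intro q qq hd
    rw [Nat.card_congr Subgroup.topEquiv.toEquiv, hcard] at hd
    rcases (Nat.prime_dvd_prime_iff_eq qq hp).1 (qq.dvd_of_dvd_pow hd) with rfl
    exact hpπ
  · have h1 : IsPGroup p Q := IsPGroup.of_card hcard
    exact (h1.to_subgroup ⊤).isNilpotent

lemma mem_piResidual_set_inf {G : Type*} [Group G] {N₁ N₂ : Subgroup G}
    (h₁ : N₁ ∈ {N : Subgroup G | N.Normal ∧ ∀ p : ℕ, p.Prime → p ∣ N.index → p ∈ π})
    (h₂ : N₂ ∈ {N : Subgroup G | N.Normal ∧ ∀ p : ℕ, p.Prime → p ∣ N.index → p ∈ π}) :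
    N₁ ⊓ N₂ ∈ {N : Subgroup G | N.Normal ∧ ∀ p : ℕ, p.Prime → p ∣ N.index → p ∈ π} := by
  refine ⟨⟨fun n hn g => ⟨h₁.1.conj_mem n hn.1 g, h₂.1.conj_mem n hn.2 g⟩⟩, ?_⟩
  intro p pp hd
  haveI := h₁.1
  have hrel : (N₁ ⊓ N₂).relIndex N₂ * N₂.index = (N₁ ⊓ N₂).index :=
    Subgroup.relIndex_mul_index inf_le_right
  rw [← hrel, Subgroup.inf_relIndex_right] at hd
  rcases pp.dvd_mul.1 hd with h | h
  · exact h₁.2 p pp (dvd_trans h (Subgroup.relIndex_dvd_index_of_normal N₁ N₂))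
  · exact h₂.2 p pp h

lemma piResidual_spec (G : Type*) [Group G] [Finite G] :
    (piResidual π G).Normal ∧ ∀ p : ℕ, p.Prime → p ∣ (piResidual π G).index → p ∈ π := by
  set S := {N : Subgroup G | N.Normal ∧ ∀ p : ℕ, p.Prime → p ∣ N.index → p ∈ π} with hS
  have htop : (⊤ : Subgroup G) ∈ S := by
    refine ⟨inferInstance, fun p pp hd => ?_⟩
    rw [Subgroup.index_top] at hd
    exact absurd (Nat.eq_one_of_dvd_one hd) pp.ne_one.elim
  obtain ⟨a, haS, hamin⟩ : ∃ a ∈ S, ∀ a' ∈ S, id a' ≤ id a → id a = id a' := by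
    obtain ⟨a, haS, hmin⟩ := Set.Finite.exists_minimalFor id S (Set.toFinite S) ⟨⊤, htop⟩
    exact ⟨a, haS, fun a' ha' h => le_antisymm (hmin ha' h) h⟩
  have hale : ∀ b ∈ S, a ≤ b := by
    intro b hb
    have h1 : a ⊓ b ∈ S := mem_piResidual_set_inf haS hb
    have h2 := hamin _ h1 (inf_le_left : id (a ⊓ b) ≤ id a)
    simp only [id] at h2
    rw [h2]
    exact inf_le_right
  have heq : piResidual π G = a := by
    apply le_antisymm (iInf₂_le a haS)
    exact le_iInf₂ fun b hb => hale b hb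
  rw [heq]
  exact haS

lemma piResidual_le_comap {H K : Type*} [Group H] [Group K] (e : H ≃* K) :
    piResidual π H ≤ (piResidual π K).comap e.toMonoidHom := by
  intro x hx
  simp only [Subgroup.mem_comap, piResidual, Subgroup.mem_iInf] at *
  intro N hN
  have hmem : N.comap e.toMonoidHom ∈
      {N : Subgroup H | N.Normal ∧ ∀ p : ℕ, p.Prime → p ∣ N.index → p ∈ π} := by
    refine ⟨hN.1.comap e.toMonoidHom, fun p pp hd => hN.2 p pp ?_⟩
    rwa [Subgroup.index_comap_of_surjective N e.surjective] at hd
  exact hx _ hmem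

lemma piResidualIn_normal {G : Type*} [Group G] {R : Subgroup G} (hR : R.Normal) :
    (piResidualIn π R).Normal := by
  haveI := hR
  constructor
  intro x hx g
  obtain ⟨y, hy, rfl⟩ := hx
  let e : R ≃* R := MulAut.conjNormal g
  have hy' : e y ∈ piResidual π R := piResidual_le_comap e hy
  refine ⟨e y, hy', ?_⟩
  show ((e y : R) : G) = g * (y : G) * g⁻¹
  exact MulAut.conjNormal_apply g y

lemma normal_isDnormal {G : Type*} [Group G] {N : Subgroup G} (hN : N.Normal) :
    IsDnormal π N := by
  by_cases hss : π.Subsingleton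
  · exact Or.inl ⟨hss, hN⟩
  · refine Or.inr ⟨hss, piResidualIn_normal hN, ?_⟩
    rw [Subgroup.normalizer_eq_top_iff.2 hN]
    exact le_top

lemma isSimpleGroup_quotient {G : Type*} [Group G] {M : Subgroup G} (hMn : M.Normal)
    (hMproper : M ≠ ⊤)
    (hMmax : ∀ L : Subgroup G, L ≠ ⊤ → IsDnormal π L → M ≤ L → L = M) :
    letI := hMn; IsSimpleGroup (G ⧸ M) := by
  letI := hMn
  obtain ⟨x, hx⟩ : ∃ x : G, x ∉ M := by
    by_contra h
    push_neg at h
    exact hMproper ((Subgroup.eq_top_iff' M).2 h)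
  haveI : Nontrivial (G ⧸ M) := ⟨⟨QuotientGroup.mk x, 1, by
    simpa [QuotientGroup.eq_one_iff] using hx⟩⟩
  constructor
  intro H hH
  set f := QuotientGroup.mk' M
  have hker : M ≤ H.comap f := fun m hm => by
    simp only [Subgroup.mem_comap]
    have : f m = 1 := (QuotientGroup.eq_one_iff m).2 hm
    rw [this]; exact H.one_mem
  by_cases htop : H.comap f = ⊤
  · right
    have := Subgroup.map_comap_eq_self_of_surjective (QuotientGroup.mk'_surjective M) H
    rw [← this, htop]
    exact Subgroup.map_top_of_surjective f (QuotientGroup.mk'_surjective M)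
  · left
    have hDn : IsDnormal π (H.comap f) := normal_isDnormal (hH.comap f)
    have hMeq := hMmax _ htop hDn hker
    have := Subgroup.map_comap_eq_self_of_surjective (QuotientGroup.mk'_surjective M) H
    rw [← this, hMeq]
    refine le_antisymm ?_ bot_le
    rintro q ⟨m, hm, rfl⟩
    simpa [Subgroup.mem_bot] using (QuotientGroup.eq_one_iff m).2 hm

end AuxLemmas


section AuxLemmas2
universe u
variable {π : Set ℕ}

lemma subgroupOf_subgroupOf_eq {G : Type*} [Group G] {A B N : Subgroup G} (hBN : B ≤ N) :
    (A.subgroupOf N).subgroupOf (B.subgroupOf N) =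
      (A.subgroupOf B).comap (Subgroup.subgroupOfEquivOfLe hBN).toMonoidHom := by
  ext x
  simp [Subgroup.mem_subgroupOf, Subgroup.subgroupOfEquivOfLe]

lemma chain_quotient_pi_or_p (π : Set ℕ) :
    ∀ (n : ℕ) (G : Type u) [Group G] [Finite G] (c : Fin (n+1) → Subgroup G),
      c 0 = ⊥ → c (Fin.last n) = ⊤ →
      (∀ i : Fin n, c i.castSucc ≤ c i.succ ∧
        ((c i.castSucc).subgroupOf (c i.succ)).Normal ∧
        ((∀ p : ℕ, p.Prime → p ∣ ((c i.castSucc).subgroupOf (c i.succ)).index → p ∈ π) ∨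
          ∃ p : ℕ, p.Prime ∧ p ∉ π ∧
            ∃ k : ℕ, ((c i.castSucc).subgroupOf (c i.succ)).index = p ^ k)) →
      ∀ (Q : Type u) [Group Q] (f : G →* Q), Function.Surjective f → IsSimpleGroup Q →
        ((∀ p : ℕ, p.Prime → p ∣ Nat.card Q → p ∈ π) ∨
          ∃ p : ℕ, p.Prime ∧ p ∉ π ∧ ∃ k : ℕ, Nat.card Q = p ^ k) := by
  intro n
  induction n with
  | zero =>
    intro G _ _ c h0 hlast _ Q _ f hf hQ
    exfalso
    have hbt : (⊤ : Subgroup G) = ⊥ := by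
      rw [← h0, ← hlast]; rfl
    have htriv : ∀ g : G, g = 1 := fun g =>
      Subgroup.mem_bot.1 (hbt ▸ Subgroup.mem_top g)
    haveI := hQ
    obtain ⟨a, b, hab⟩ := exists_pair_ne Q
    obtain ⟨x, rfl⟩ := hf a
    obtain ⟨y, rfl⟩ := hf b
    exact hab (by rw [htriv x, htriv y])
  | succ n IH =>
    intro G _ _ c h0 hlast hc Q _ f hf hQ
    have hkeyN := hc (Fin.last n)
    rw [Fin.succ_last, hlast] at hkeyN
    set N : Subgroup G := c (Fin.castSucc (Fin.last n)) with hN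
    obtain ⟨hNle, hNnorm', hNfac⟩ := hkeyN
    have hNnormal : N.Normal := by
      constructor
      intro x hx g
      have h1 := hNnorm'.conj_mem ⟨x, Subgroup.mem_top x⟩
        (Subgroup.mem_subgroupOf.2 hx) ⟨g, Subgroup.mem_top g⟩
      simpa [Subgroup.mem_subgroupOf] using h1
    haveI := hNnormal
    have hidx : (N.subgroupOf (⊤ : Subgroup G)).index = N.index :=
      N.relIndex_top_right
    by_cases hmap : N.map f = ⊤
    · -- f restricted to N is surjective; recurse
      have hf' : Function.Surjective (f.comp N.subtype) := by
        intro q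
        have hq : q ∈ N.map f := by rw [hmap]; exact Subgroup.mem_top q
        obtain ⟨x, hxN, hfx⟩ := hq
        exact ⟨⟨x, hxN⟩, hfx⟩
      have hmono : Monotone c := Fin.monotone_iff_le_succ.2 fun i => (hc i).1
      refine IH N (fun i => (c i.castSucc).subgroupOf N) ?_ ?_ ?_ Q (f.comp N.subtype) hf' hQ
      · show (c (Fin.castSucc 0)).subgroupOf N = ⊥
        rw [Fin.castSucc_zero, h0, Subgroup.bot_subgroupOf]
      · show (c (Fin.castSucc (Fin.last n))).subgroupOf N = ⊤
        rw [← hN, Subgroup.subgroupOf_self]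
      · intro i
        have hkey := hc i.castSucc
        have hBN : c (i.castSucc).succ ≤ N := by
          rw [hN]
          refine hmono ?_
          rw [Fin.succ_castSucc]
          exact Fin.castSucc_le_castSucc_iff.2 (Fin.le_last _)
        obtain ⟨hAB, hABn, hfac⟩ := hkey
        have e := Subgroup.subgroupOfEquivOfLe hBN
        have htrans :
            (((c (Fin.castSucc i).castSucc).subgroupOf N).subgroupOf
              ((c (Fin.castSucc i).succ).subgroupOf N)) =
            ((c (Fin.castSucc i).castSucc).subgroupOf (c (Fin.castSucc i).succ)).comap
              (Subgroup.subgroupOfEquivOfLe hBN).toMonoidHom :=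
          subgroupOf_subgroupOf_eq hBN
        have hisucc : ((fun i => (c i.castSucc).subgroupOf N) i.succ) =
            (c (Fin.castSucc i).succ).subgroupOf N := by
          show (c (Fin.castSucc i.succ)).subgroupOf N = _
          rw [← Fin.succ_castSucc]
        refine ⟨?_, ?_, ?_⟩
        · show ((c i.castSucc.castSucc).subgroupOf N) ≤ ((c i.succ.castSucc).subgroupOf N)
          rw [← Fin.succ_castSucc]
          exact Subgroup.comap_mono hAB
        · rw [← Fin.succ_castSucc]
          show ((((c (Fin.castSucc i).castSucc).subgroupOf N)).subgroupOf
            ((c (Fin.castSucc i).succ).subgroupOf N)).Normal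
          rw [htrans]
          exact hABn.comap _
        · rw [← Fin.succ_castSucc]
          show (∀ p : ℕ, p.Prime → p ∣ ((((c (Fin.castSucc i).castSucc).subgroupOf N)).subgroupOf
              ((c (Fin.castSucc i).succ).subgroupOf N)).index → p ∈ π) ∨
            ∃ p : ℕ, p.Prime ∧ p ∉ π ∧
              ∃ k : ℕ, ((((c (Fin.castSucc i).castSucc).subgroupOf N)).subgroupOf
                ((c (Fin.castSucc i).succ).subgroupOf N)).index = p ^ k
          rw [htrans, Subgroup.index_comap_of_surjective _ (Subgroup.subgroupOfEquivOfLe hBN).surjective]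
          exact hfac
    · -- N maps to ⊥; Q is a quotient of G/N
      have hbot : N.map f = ⊥ := by
        rcases hQ.eq_bot_or_eq_top_of_normal (N.map f) (hNnormal.map f hf) with h | h
        · exact h
        · exact absurd h hmap
      have hker : N ≤ f.ker := by
        intro x hx
        have : f x ∈ N.map f := Subgroup.mem_map_of_mem f hx
        rw [hbot] at this
        simpa [MonoidHom.mem_ker] using this
      let φ : G ⧸ N →* Q := QuotientGroup.lift N f hker
      have hφ : Function.Surjective φ := by
        intro q
        obtain ⟨x, rfl⟩ := hf q
        exact ⟨QuotientGroup.mk x, rfl⟩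
      have hdvd : Nat.card Q ∣ N.index := by
        have h1 := Subgroup.card_dvd_of_surjective φ hφ
        rwa [← Subgroup.index_eq_card] at h1
      rw [hidx] at hNfac
      rcases hNfac with hπ | ⟨p, hp, hpπ, k, hk⟩
      · exact Or.inl fun p pp hd => hπ p pp (dvd_trans hd hdvd)
      · rw [hk] at hdvd
        obtain ⟨m, _, hcard⟩ := (Nat.dvd_prime_pow hp).1 hdvd
        exact Or.inr ⟨p, hp, hpπ, m, hcard⟩

end AuxLemmas2


section AuxLemmas3
variable {π : Set ℕ}

lemma piResidualIn_eq_of_le {G : Type*} [Group G] [Finite G] {R L : Subgroup G}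
    (hR : R.Normal) (hRidx : ∀ p : ℕ, p.Prime → p ∣ R.index → p ∈ π) (hRL : R ≤ L) :
    piResidualIn π L = piResidualIn π R := by
  haveI := hR
  have hPRn : (piResidualIn π R).Normal := piResidualIn_normal hR
  have hPRR : (piResidualIn π R) ≤ R := Subgroup.map_subtype_le _
  obtain ⟨hRn', hRidx'⟩ := piResidual_spec (π := π) R
  obtain ⟨hLn', hLidx'⟩ := piResidual_spec (π := π) L
  apply le_antisymm
  · have hsub : (piResidualIn π R).subgroupOf R = piResidual π R :=
      Subgroup.comap_map_eq_self_of_injective (Subgroup.subtype_injective R) _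
    have hmem : ((piResidualIn π R).subgroupOf L) ∈
        {N : Subgroup L | N.Normal ∧ ∀ p : ℕ, p.Prime → p ∣ N.index → p ∈ π} := by
      constructor
      · constructor
        intro x hx g
        refine Subgroup.mem_subgroupOf.2 ?_
        have h2 := hPRn.conj_mem _ (Subgroup.mem_subgroupOf.1 hx) (g : G)
        simpa using h2
      · intro p pp hd
        have h1 : (piResidualIn π R).relIndex R * R.relIndex L = (piResidualIn π R).relIndex L :=
          Subgroup.relIndex_mul_relIndex _ _ _ hPRR hRL
        have h2 : ((piResidualIn π R).subgroupOf L).index = (piResidualIn π R).relIndex L := rfl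
        rw [h2, ← h1] at hd
        rcases pp.dvd_mul.1 hd with h | h
        · apply hRidx' p pp
          rwa [show (piResidualIn π R).relIndex R = (piResidual π R).index from
            by rw [← hsub]; rfl] at h
        · exact hRidx p pp (dvd_trans h (Subgroup.relIndex_dvd_index_of_normal R L))
    have hle : piResidual π L ≤ (piResidualIn π R).subgroupOf L := iInf₂_le _ hmem
    calc piResidualIn π L = (piResidual π L).map L.subtype := rfl
      _ ≤ ((piResidualIn π R).subgroupOf L).map L.subtype := Subgroup.map_mono hle
      _ = (piResidualIn π R) ⊓ L := Subgroup.subgroupOf_map_subtype _ L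
      _ = piResidualIn π R := inf_eq_left.2 (hPRR.trans hRL)
  · haveI := hLn'
    set N₂ := (piResidual π L).comap (Subgroup.inclusion hRL) with hN₂
    have key : ∀ x : (R.subgroupOf L),
        Subgroup.inclusion hRL ((Subgroup.subgroupOfEquivOfLe hRL) x) = (x : L) :=
      fun x => Subtype.ext rfl
    have hEq : N₂.comap (Subgroup.subgroupOfEquivOfLe hRL).toMonoidHom
        = (piResidual π L).subgroupOf (R.subgroupOf L) := by
      ext x
      simp only [Subgroup.mem_comap, hN₂, Subgroup.mem_subgroupOf]
      rw [show ((Subgroup.subgroupOfEquivOfLe hRL).toMonoidHom x) =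
        (Subgroup.subgroupOfEquivOfLe hRL) x from rfl, key x]
    have hsurj : Function.Surjective ⇑(Subgroup.subgroupOfEquivOfLe hRL).toMonoidHom :=
      (Subgroup.subgroupOfEquivOfLe hRL).surjective
    have hN₂idx : N₂.index = (piResidual π L).relIndex (R.subgroupOf L) := by
      have h3 := Subgroup.index_comap_of_surjective N₂ hsurj
      rw [← h3, hEq]
      rfl
    have hmem : N₂ ∈ {N : Subgroup R | N.Normal ∧ ∀ p : ℕ, p.Prime → p ∣ N.index → p ∈ π} := by
      refine ⟨hLn'.comap _, fun p pp hd => ?_⟩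
      rw [hN₂idx] at hd
      exact hLidx' p pp (dvd_trans hd (Subgroup.relIndex_dvd_index_of_normal _ _))
    have hle : piResidual π R ≤ N₂ := iInf₂_le _ hmem
    rintro x ⟨y, hy, rfl⟩
    exact ⟨Subgroup.inclusion hRL y, hle hy, rfl⟩

end AuxLemmas3

/-- Lemma 1.6: a maximal `N^π`-Dnormal proper subgroup of a `π'`-soluble group
contains the `N^π`-residual. -/
theorem nPiResidual_le_of_maximal_dnormal (π : Set ℕ) (hπ : ∀ p ∈ π, p.Prime)
    (G : Type*) [Group G] [Finite G] (hsol : IsPiPrimeSoluble π G)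
    (M : Subgroup G) (hMproper : M ≠ ⊤) (hMD : IsDnormal π M)
    (hMmax : ∀ L : Subgroup G, L ≠ ⊤ → IsDnormal π L → M ≤ L → L = M) :
    nPiResidual π G ≤ M := by
  classical
  obtain ⟨n, c, h0, hlast, hc⟩ := hsol
  have normalCase : M.Normal → nPiResidual π G ≤ M := by
    intro hMn
    haveI := hMn
    have hsimple : IsSimpleGroup (G ⧸ M) := isSimpleGroup_quotient hMn hMproper hMmax
    have hres := chain_quotient_pi_or_p π n G c h0 hlast hc (G ⧸ M)
      (QuotientGroup.mk' M) (QuotientGroup.mk'_surjective M) hsimple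
    have hNPi : IsNPiGroup π (G ⧸ M) := by
      rcases hres with hπc | ⟨p, hp, hpπ, k, hk⟩
      · exact isNPiGroup_of_pi hπc
      · exact isNPiGroup_of_pPow hp hpπ hk
    exact iInf₂_le M ⟨hMn, hNPi⟩
  by_cases hss : π.Subsingleton
  · rcases hMD with ⟨_, hMn⟩ | ⟨hns, _⟩
    · exact normalCase hMn
    · exact absurd hss hns
  · rcases hMD with ⟨hs, _⟩ | ⟨_, hO, hRnorm⟩
    · exact absurd hs hss
    obtain ⟨hRn, hRidx⟩ := piResidual_spec (π := π) G
    by_cases hL : M ⊔ piResidual π G = ⊤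
    · have hMn : M.Normal := by
        refine Subgroup.normalizer_eq_top_iff.1 (eq_top_iff.2 ?_)
        rw [← hL]
        exact sup_le Subgroup.le_normalizer hRnorm
      exact normalCase hMn
    · have hLD : IsDnormal π (M ⊔ piResidual π G) := by
        refine Or.inr ⟨hss, ?_, le_trans le_sup_right Subgroup.le_normalizer⟩
        rw [piResidualIn_eq_of_le hRn hRidx le_sup_right]
        exact piResidualIn_normal hRn
      have hLM : M ⊔ piResidual π G = M := hMmax _ hL hLD le_sup_left
      have hRM : piResidual π G ≤ M := le_sup_right.trans hLM.le
      haveI := hRn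
      have hRNPi : IsNPiGroup π (G ⧸ piResidual π G) :=
        isNPiGroup_of_pi (fun p pp hd => hRidx p pp (by rwa [Subgroup.index_eq_card]))
      exact le_trans (iInf₂_le _ ⟨hRn, hRNPi⟩) hRM
end

section
/- Let π be a set of primes and H, K two N^π-Dnormal subgroups of a finite group G. Then the join ⟨H, K⟩ is N^π-Dnormal in G. -/
section DnormalSupHelpers

open Subgroup Pointwise

variable {π : Set ℕ}

/-- `n` is a `π`-number. -/
private def PiNat (π : Set ℕ) (n : ℕ) : Prop := ∀ p : ℕ, p.Prime → p ∣ n → p ∈ π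

private lemma PiNat.of_dvd {m n : ℕ} (h : PiNat π n) (hd : m ∣ n) : PiNat π m :=
  fun p pp hp => h p pp (hp.trans hd)

private lemma PiNat.mul {m n : ℕ} (hm : PiNat π m) (hn : PiNat π n) : PiNat π (m * n) :=
  fun p pp hp => ((Nat.Prime.dvd_mul pp).mp hp).elim (hm p pp) (hn p pp)

private lemma eq_one_of_pi_of_pi' {n : ℕ} (hn : n ≠ 0) (h1 : PiNat π n)
    (h2 : ∀ p : ℕ, p.Prime → p ∣ n → p ∉ π) : n = 1 := by
  by_contra h
  obtain ⟨p, pp, hd⟩ := Nat.exists_prime_and_dvd h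
  exact h2 p pp hd (h1 p pp hd)

private lemma piResidual_eq_sInf (G : Type*) [Group G] :
    piResidual π G = sInf {N : Subgroup G | N.Normal ∧ PiNat π N.index} :=
  (sInf_eq_iInf).symm

private lemma normal_piResidual (G : Type*) [Group G] : (piResidual π G).Normal := by
  rw [piResidual_eq_sInf]
  exact
    { conj_mem := by
        intro n hn g
        rw [Subgroup.mem_sInf] at hn ⊢
        intro N hN
        exact hN.1.conj_mem n (hn N hN) g }

private lemma piResidual_le {G : Type*} [Group G] {N : Subgroup G} (h1 : N.Normal)
    (h2 : PiNat π N.index) : piResidual π G ≤ N := by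
  rw [piResidual_eq_sInf]
  exact sInf_le ⟨h1, h2⟩

private lemma piNat_index_piResidual (G : Type*) [Group G] [Finite G] :
    PiNat π (piResidual π G).index := by
  set S : Set (Subgroup G) := {N | N.Normal ∧ PiNat π N.index} with hSdef
  have hclosed : ∀ x ∈ S, ∀ y ∈ S, x ⊓ y ∈ S := by
    intro x hx y hy
    haveI := hx.1
    haveI := hy.1
    refine ⟨{ conj_mem := fun n hn g => ⟨hx.1.conj_mem n hn.1 g, hy.1.conj_mem n hn.2 g⟩ }, ?_⟩
    have hker : ((QuotientGroup.mk' x).prod (QuotientGroup.mk' y)).ker = x ⊓ y := by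
      rw [MonoidHom.ker_prod, QuotientGroup.ker_mk', QuotientGroup.ker_mk']
    have hdvd : (x ⊓ y).index ∣ x.index * y.index := by
      calc (x ⊓ y).index
          = Nat.card (((QuotientGroup.mk' x).prod (QuotientGroup.mk' y)).range) := by
            rw [← hker, Subgroup.index_ker]
        _ ∣ Nat.card ((G ⧸ x) × (G ⧸ y)) := Subgroup.card_subgroup_dvd_card _
        _ = x.index * y.index := by
            rw [Nat.card_prod, Subgroup.index_eq_card, Subgroup.index_eq_card]
    intro p pp hp
    exact ((Nat.Prime.dvd_mul pp).mp (hp.trans hdvd)).elim (hx.2 p pp) (hy.2 p pp)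
  have htop : (⊤ : Subgroup G) ∈ S := by
    refine ⟨⟨fun n _ g => Subgroup.mem_top _⟩, ?_⟩
    intro p pp hp
    rw [Subgroup.index_top] at hp
    exact absurd (Nat.le_of_dvd one_pos hp) (Nat.not_le_of_lt pp.one_lt)
  have hfin : S.Finite := Set.toFinite S
  have hne : hfin.toFinset.Nonempty := ⟨⊤, hfin.mem_toFinset.mpr htop⟩
  have hmem : hfin.toFinset.inf' hne id ∈ S :=
    Finset.inf'_mem S hclosed hfin.toFinset hne id (fun i hi => hfin.mem_toFinset.mp hi)
  have heq : sInf S = hfin.toFinset.inf' hne id := by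
    apply le_antisymm
    · exact Finset.le_inf' hne id (fun b hb => sInf_le (hfin.mem_toFinset.mp hb))
    · exact le_sInf (fun b hb => Finset.inf'_le id (hfin.mem_toFinset.mpr hb))
  have : PiNat π (sInf S).index := heq ▸ hmem.2
  rwa [piResidual_eq_sInf]

private lemma map_piResidual {G Q : Type*} [Group G] [Finite G] [Group Q] (f : G →* Q)
    (hf : Function.Surjective f) : (piResidual π G).map f = piResidual π Q := by
  have : Finite Q := Finite.of_surjective f hf
  haveI hPn : (piResidual π G).Normal := normal_piResidual G
  haveI hMn : ((piResidual π G).map f).Normal := hPn.map f hf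
  apply le_antisymm
  · rw [Subgroup.map_le_iff_le_comap]
    apply piResidual_le ((normal_piResidual Q).comap f)
    rw [Subgroup.index_comap_of_surjective _ hf]
    exact piNat_index_piResidual Q
  · apply piResidual_le hMn
    set P := piResidual π G with hP
    have hle : P ≤ ((QuotientGroup.mk' (P.map f)).comp f).ker := by
      intro z hz
      have h1 : f z ∈ P.map f := Subgroup.mem_map_of_mem f hz
      simpa [MonoidHom.mem_ker, QuotientGroup.eq_one_iff] using h1
    have hsurj : Function.Surjective (QuotientGroup.lift P ((QuotientGroup.mk' (P.map f)).comp f) hle) := by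
      intro z
      obtain ⟨w, rfl⟩ := QuotientGroup.mk'_surjective (P.map f) z
      obtain ⟨v, rfl⟩ := hf w
      exact ⟨QuotientGroup.mk v, rfl⟩
    have hdvd : (P.map f).index ∣ P.index := by
      rw [Subgroup.index_eq_card, Subgroup.index_eq_card]
      exact Subgroup.card_dvd_of_surjective _ hsurj
    exact (piNat_index_piResidual G).of_dvd hdvd

private lemma piNat_card_map {G Q : Type*} [Group G] [Finite G] [Group Q] (f : G →* Q)
    (H : Subgroup G) (h : PiNat π (Nat.card H)) : PiNat π (Nat.card (H.map f)) :=
  h.of_dvd (Subgroup.card_dvd_of_surjective _ (f.subgroupMap_surjective H))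

private lemma mem_normalizer_of_conj_mem {G : Type*} [Group G] [Finite G] {P : Subgroup G}
    {a : G} (h : ∀ p ∈ P, a * p * a⁻¹ ∈ P) : a ∈ Subgroup.normalizer (P : Set _) := by
  rw [Subgroup.mem_normalizer_iff]
  intro g
  refine ⟨h g, fun hg => ?_⟩
  have hinj : Function.Injective (fun p : P => (⟨a * ↑p * a⁻¹, h ↑p p.2⟩ : P)) := by
    intro x y hxy
    have hxy' : a * ↑x * a⁻¹ = a * ↑y * a⁻¹ := congrArg Subtype.val hxy
    have : (x : G) = y := by
      have := mul_right_cancel hxy'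
      exact mul_left_cancel this
    exact Subtype.ext this
  obtain ⟨p, hp⟩ := Finite.surjective_of_injective hinj ⟨a * g * a⁻¹, hg⟩
  have hp' : a * ↑p * a⁻¹ = a * g * a⁻¹ := congrArg Subtype.val hp
  have : (p : G) = g := by
    have := mul_right_cancel hp'
    exact mul_left_cancel this
  exact this ▸ p.2

private lemma card_sup_dvd {G : Type*} [Group G] [Finite G] (P Q : Subgroup G)
    (h : Q ≤ Subgroup.normalizer (P : Set _)) : Nat.card (P ⊔ Q : Subgroup G) ∣ Nat.card P * Nat.card Q := by
  classical
  -- the product set P * Q is a subgroup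
  have hmulmem : ∀ {x y : G}, x ∈ (P : Set G) * (Q : Set G) → y ∈ (P : Set G) * (Q : Set G) →
      x * y ∈ (P : Set G) * (Q : Set G) := by
    rintro x y ⟨p1, hp1, q1, hq1, rfl⟩ ⟨p2, hp2, q2, hq2, rfl⟩
    refine ⟨p1 * (q1 * p2 * q1⁻¹), mul_mem hp1 ((Subgroup.mem_normalizer_iff.mp (h hq1) p2).mp hp2),
      q1 * q2, mul_mem hq1 hq2, by group⟩
  let PQ : Subgroup G :=
    { carrier := (P : Set G) * (Q : Set G)
      one_mem' := ⟨1, P.one_mem, 1, Q.one_mem, one_mul 1⟩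
      mul_mem' := fun hx hy => hmulmem hx hy
      inv_mem' := by
        rintro x ⟨p, hp, q, hq, rfl⟩
        refine ⟨q⁻¹ * p⁻¹ * q, ?_, q⁻¹, inv_mem hq, by group⟩
        have := (Subgroup.mem_normalizer_iff.mp (inv_mem (h hq)) p⁻¹).mp (inv_mem hp)
        simpa using this }
  have hsub : P ⊔ Q ≤ PQ :=
    sup_le (fun p hp => ⟨p, hp, 1, Q.one_mem, mul_one p⟩)
      (fun q hq => ⟨1, P.one_mem, q, hq, one_mul q⟩)
  set K := P ⊔ Q with hK
  set P' : Subgroup K := P.subgroupOf K with hP'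
  have hKle : K ≤ Subgroup.normalizer (P : Set _) := sup_le Subgroup.le_normalizer h
  haveI hP'n : P'.Normal := by
    constructor
    intro n hn k
    rw [Subgroup.mem_subgroupOf] at hn ⊢
    have := (Subgroup.mem_normalizer_iff.mp (hKle k.2) (n : G)).mp hn
    simpa using this
  have hcard1 : Nat.card K = Nat.card (K ⧸ P') * Nat.card P' :=
    Subgroup.card_eq_card_quotient_mul_card_subgroup P'
  have hcard2 : Nat.card P' = Nat.card P :=
    Nat.card_congr (Subgroup.subgroupOfEquivOfLe le_sup_left).toEquiv
  set ψ : Q →* K ⧸ P' := (QuotientGroup.mk' P').comp (Subgroup.inclusion le_sup_right) with hψdef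
  have hψ : Function.Surjective ψ := by
    intro z
    induction z using QuotientGroup.induction_on with
    | H x =>
      obtain ⟨p, hp, q, hq, hpq⟩ := hsub x.2
      refine ⟨⟨q, hq⟩, ?_⟩
      show QuotientGroup.mk _ = QuotientGroup.mk x
      rw [QuotientGroup.eq]
      rw [Subgroup.mem_subgroupOf]
      have hco : (((Subgroup.inclusion (le_sup_right : Q ≤ K)) ⟨q, hq⟩)⁻¹ * x : K) = (q⁻¹ * (x : G) : G) := rfl
      rw [hco]
      have hx' : (q : G)⁻¹ * (x : G) = q⁻¹ * p * q := by rw [← hpq]; group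
      rw [hx']
      have := (Subgroup.mem_normalizer_iff.mp (inv_mem (h hq)) p).mp hp
      simpa using this
  have hdvd : Nat.card (K ⧸ P') ∣ Nat.card Q := Subgroup.card_dvd_of_surjective ψ hψ
  calc Nat.card K = Nat.card (K ⧸ P') * Nat.card P := by rw [hcard1, hcard2]
    _ ∣ Nat.card Q * Nat.card P := mul_dvd_mul_right hdvd _
    _ = Nat.card P * Nat.card Q := mul_comm _ _

private lemma le_normalizer_sup {G : Type*} [Group G] [Finite G] (H K : Subgroup G) :
    Subgroup.normalizer (H : Set _) ⊓ Subgroup.normalizer (K : Set _) ≤ Subgroup.normalizer (((H ⊔ K : Subgroup G)) : Set G) := by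
  intro x hx
  obtain ⟨h1, h2⟩ := Subgroup.mem_inf.mp hx
  apply mem_normalizer_of_conj_mem
  intro s hs
  have : H ⊔ K ≤ (H ⊔ K).comap (MulAut.conj x).toMonoidHom := by
    refine sup_le (fun g hg => ?_) (fun g hg => ?_)
    · exact Subgroup.mem_comap.mpr (Subgroup.mem_sup_left
        ((Subgroup.mem_normalizer_iff.mp h1 g).mp hg))
    · exact Subgroup.mem_comap.mpr (Subgroup.mem_sup_right
        ((Subgroup.mem_normalizer_iff.mp h2 g).mp hg))
  simpa using this hs

private lemma piResidualIn_le_self {G : Type*} [Group G] (A : Subgroup G) :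
    piResidualIn π A ≤ A := by
  calc piResidualIn π A ≤ (⊤ : Subgroup A).map A.subtype := Subgroup.map_mono le_top
    _ = A := by rw [← MonoidHom.range_eq_map, Subgroup.range_subtype]

private lemma piResidualIn_le {G : Type*} [Group G] [Finite G] (A : Subgroup G) :
    piResidualIn π A ≤ piResidual π G := by
  haveI := normal_piResidual (π := π) G
  have h1 : piResidual π ↥A ≤ (piResidual π G).subgroupOf A := by
    apply piResidual_le ((normal_piResidual G).subgroupOf A)
    exact (piNat_index_piResidual G).of_dvd (Subgroup.relIndex_dvd_index_of_normal _ _)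
  calc piResidualIn π A = (piResidual π ↥A).map A.subtype := rfl
    _ ≤ ((piResidual π G).subgroupOf A).map A.subtype := Subgroup.map_mono h1
    _ = piResidual π G ⊓ A := Subgroup.subgroupOf_map_subtype _ _
    _ ≤ piResidual π G := inf_le_left


private lemma quot_pi (π : Set ℕ) (Q : Type*) [Group Q] [Finite Q] (A B : Subgroup Q)
    (hsup : A ⊔ B = ⊤)
    (hApi : PiNat π (Nat.card A)) (hBpi : PiNat π (Nat.card B))
    (hA : piResidual π Q ≤ Subgroup.normalizer (A : Set _)) (hB : piResidual π Q ≤ Subgroup.normalizer (B : Set _)) :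
    PiNat π (Nat.card Q) := by
  set R : Subgroup Q := piResidual π Q with hR
  haveI hRn : R.Normal := normal_piResidual Q
  -- commutators of R with A (resp. B) land in R ⊓ A (resp. R ⊓ B)
  have comm_mem : ∀ (C : Subgroup Q), R ≤ Subgroup.normalizer (C : Set _) →
      ∀ r ∈ R, ∀ a ∈ C, r⁻¹ * a⁻¹ * r * a ∈ R ⊓ C := by
    intro C hC r hr a ha
    refine Subgroup.mem_inf.mpr ⟨?_, ?_⟩
    · have h1 : a⁻¹ * r * (a⁻¹)⁻¹ ∈ R := hRn.conj_mem r hr a⁻¹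
      have h2 : r⁻¹ * a⁻¹ * r * a = r⁻¹ * (a⁻¹ * r * (a⁻¹)⁻¹) := by group
      rw [h2]
      exact mul_mem (inv_mem hr) h1
    · have h1 : r⁻¹ * a⁻¹ * (r⁻¹)⁻¹ ∈ C :=
        (Subgroup.mem_normalizer_iff.mp (hC (inv_mem hr)) a⁻¹).mp (inv_mem ha)
      have h2 : r⁻¹ * a⁻¹ * r * a = (r⁻¹ * a⁻¹ * (r⁻¹)⁻¹) * a := by group
      rw [h2]
      exact mul_mem h1 ha
  have fact1 : ∀ (C : Subgroup Q), ∀ a ∈ C, ∀ p ∈ R ⊓ C, a * p * a⁻¹ ∈ R ⊓ C := by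
    intro C a ha p hp
    exact Subgroup.mem_inf.mpr ⟨hRn.conj_mem p (Subgroup.mem_inf.mp hp).1 a,
      mul_mem (mul_mem ha (Subgroup.mem_inf.mp hp).2) (inv_mem ha)⟩
  have fact2 : ∀ (C : Subgroup Q), R ≤ Subgroup.normalizer (C : Set _) →
      ∀ a ∈ C, ∀ p ∈ R, a * p * a⁻¹ * p⁻¹ ∈ R ⊓ C := by
    intro C hC a ha p hp
    have h1 : (p⁻¹)⁻¹ * (a⁻¹)⁻¹ * p⁻¹ * a⁻¹ ∈ R ⊓ C :=
      comm_mem C hC p⁻¹ (inv_mem hp) a⁻¹ (inv_mem ha)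
    have h2 : a * p * a⁻¹ * p⁻¹ = ((p⁻¹)⁻¹ * (a⁻¹)⁻¹ * p⁻¹ * a⁻¹)⁻¹ := by group
    rw [h2]
    exact inv_mem h1
  set S : Subgroup Q := (R ⊓ A) ⊔ (R ⊓ B) with hS
  have hSnorm : S.Normal := by
    apply Subgroup.normalizer_eq_top_iff.mp
    rw [eq_top_iff, ← hsup]
    refine sup_le (fun a ha => mem_normalizer_of_conj_mem (fun s hs => ?_))
      (fun b hb => mem_normalizer_of_conj_mem (fun s hs => ?_))
    · have hle : S ≤ S.comap (MulAut.conj a).toMonoidHom := by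
        refine sup_le (fun p hp => Subgroup.mem_comap.mpr ?_) (fun p hp => Subgroup.mem_comap.mpr ?_)
        · simpa using Subgroup.mem_sup_left (fact1 A a ha p hp)
        · have h1 : a * p * a⁻¹ = (a * p * a⁻¹ * p⁻¹) * p := by group
          have h2 : a * p * a⁻¹ ∈ S := by
            rw [h1]
            exact mul_mem (Subgroup.mem_sup_left (fact2 A hA a ha p (Subgroup.mem_inf.mp hp).1))
              (Subgroup.mem_sup_right hp)
          simpa using h2
      simpa using hle hs
    · have hle : S ≤ S.comap (MulAut.conj b).toMonoidHom := by
        refine sup_le (fun p hp => Subgroup.mem_comap.mpr ?_) (fun p hp => Subgroup.mem_comap.mpr ?_)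
        · have h1 : b * p * b⁻¹ = (b * p * b⁻¹ * p⁻¹) * p := by group
          have h2 : b * p * b⁻¹ ∈ S := by
            rw [h1]
            exact mul_mem (Subgroup.mem_sup_right (fact2 B hB b hb p (Subgroup.mem_inf.mp hp).1))
              (Subgroup.mem_sup_left hp)
          simpa using h2
        · simpa using Subgroup.mem_sup_right (fact1 B b hb p hp)
      simpa using hle hs
  have hSpi : PiNat π (Nat.card S) := by
    have h1 : R ⊓ B ≤ Subgroup.normalizer (((R ⊓ A : Subgroup Q)) : Set _) := by
      intro r hr
      apply mem_normalizer_of_conj_mem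
      intro p hp
      refine Subgroup.mem_inf.mpr ⟨hRn.conj_mem p (Subgroup.mem_inf.mp hp).1 r, ?_⟩
      exact (Subgroup.mem_normalizer_iff.mp (hA (Subgroup.mem_inf.mp hr).1) p).mp
        (Subgroup.mem_inf.mp hp).2
    have h2 := card_sup_dvd (R ⊓ A) (R ⊓ B) h1
    exact (PiNat.mul (hApi.of_dvd (Subgroup.card_dvd_of_le inf_le_right))
      (hBpi.of_dvd (Subgroup.card_dvd_of_le inf_le_right))).of_dvd h2
  haveI := hSnorm
  set g : Q →* Q ⧸ S := QuotientGroup.mk' S with hg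
  have hgs : Function.Surjective g := QuotientGroup.mk'_surjective S
  have hmapR : R.map g = piResidual π (Q ⧸ S) := map_piResidual g hgs
  -- the image of R is central in Q ⧸ S
  have hcent : piResidual π (Q ⧸ S) ≤ Subgroup.center (Q ⧸ S) := by
    rw [← hmapR]
    intro x hx
    obtain ⟨r, hr, rfl⟩ := Subgroup.mem_map.mp hx
    rw [Subgroup.mem_center_iff]
    intro y
    have hy : y ∈ A.map g ⊔ B.map g := by
      rw [← Subgroup.map_sup, hsup, Subgroup.map_top_of_surjective _ hgs]
      exact Subgroup.mem_top y
    have hcomm : A.map g ⊔ B.map g ≤ Subgroup.centralizer {g r} := by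
      have key : ∀ (C : Subgroup Q), R ≤ Subgroup.normalizer (C : Set _) → R ⊓ C ≤ S →
          C.map g ≤ Subgroup.centralizer {g r} := by
        intro C hC hCS z hz
        obtain ⟨a, ha, rfl⟩ := Subgroup.mem_map.mp hz
        rw [Subgroup.mem_centralizer_iff]
        rintro w hw
        rw [Set.mem_singleton_iff] at hw
        subst hw
        show g r * g a = g a * g r
        rw [← map_mul, ← map_mul, hg, QuotientGroup.mk'_apply, QuotientGroup.mk'_apply,
          QuotientGroup.eq]
        have h1 : (r * a)⁻¹ * (a * r) = (r⁻¹ * a⁻¹ * r * a)⁻¹ := by group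
        rw [h1]
        exact inv_mem (hCS (comm_mem C hC r hr a ha))
      exact sup_le (key A hA le_sup_left) (key B hB le_sup_right)
    exact (Subgroup.mem_centralizer_iff.mp (hcomm hy) (g r) rfl).symm
  -- every π'-element of Q ⧸ S is trivial
  have htriv : ∀ y : Q ⧸ S, (∀ p : ℕ, p.Prime → p ∣ orderOf y → p ∉ π) → y = 1 := by
    intro y hy
    have h0 : orderOf y ≠ 0 := (orderOf_pos y).ne'
    haveI hPn : (piResidual π (Q ⧸ S)).Normal := normal_piResidual (Q ⧸ S)
    set P : Subgroup (Q ⧸ S) := piResidual π (Q ⧸ S) with hP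
    have hyP : y ∈ P := by
      have h1 : orderOf ((QuotientGroup.mk' P) y) ∣ orderOf y := orderOf_map_dvd _ y
      have h2 : orderOf ((QuotientGroup.mk' P) y) ∣ P.index := by
        rw [Subgroup.index_eq_card]
        exact orderOf_dvd_natCard _
      have h3 : PiNat π (orderOf ((QuotientGroup.mk' P) y)) :=
        (piNat_index_piResidual (Q ⧸ S)).of_dvd h2
      have h4 : orderOf ((QuotientGroup.mk' P) y) = 1 :=
        eq_one_of_pi_of_pi' (fun hc => h0 (Nat.eq_zero_of_zero_dvd (hc ▸ h1)))
          h3 (fun p pp hp => hy p pp (hp.trans h1))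
      have h5 : (QuotientGroup.mk' P) y = 1 := orderOf_eq_one_iff.mp h4
      rwa [QuotientGroup.mk'_apply, QuotientGroup.eq_one_iff] at h5
    have hyc : y ∈ Subgroup.center (Q ⧸ S) := hcent hyP
    haveI : Finite (Q ⧸ S) := Quotient.finite _
    haveI : (Subgroup.center (Q ⧸ S)).FiniteIndex := Subgroup.finiteIndex_of_finite
    set m := (Subgroup.center (Q ⧸ S)).index with hm
    have hmpi : PiNat π m :=
      (piNat_index_piResidual (Q ⧸ S)).of_dvd (Subgroup.index_dvd_of_le hcent)
    set f : (Q ⧸ S) →* Subgroup.center (Q ⧸ S) := MonoidHom.transferCenterPow (Q ⧸ S) with hf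
    have hfy : ((f y : Q ⧸ S)) = y ^ m := MonoidHom.transferCenterPow_apply y
    have hyT : y ∈ A.map g ⊔ B.map g := by
      rw [← Subgroup.map_sup, hsup, Subgroup.map_top_of_surjective _ hgs]
      exact Subgroup.mem_top y
    have hfy2 : f y ∈ (A.map g).map f ⊔ (B.map g).map f := by
      have h1 := Subgroup.mem_map_of_mem f hyT
      rwa [Subgroup.map_sup] at h1
    have hcardP : PiNat π (Nat.card ((A.map g).map f ⊔ (B.map g).map f :
        Subgroup (Subgroup.center (Q ⧸ S)))) := by
      have h1 : PiNat π (Nat.card ((A.map g).map f)) := piNat_card_map f _ (piNat_card_map g A hApi)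
      have h2 : PiNat π (Nat.card ((B.map g).map f)) := piNat_card_map f _ (piNat_card_map g B hBpi)
      refine (h1.mul h2).of_dvd (card_sup_dvd _ _ ?_)
      rw [Subgroup.normalizer_eq_top_iff.mpr inferInstance]
      exact le_top
    have h6 : orderOf (f y) ∣ Nat.card ((A.map g).map f ⊔ (B.map g).map f :
        Subgroup (Subgroup.center (Q ⧸ S))) := by
      have := orderOf_dvd_natCard (⟨f y, hfy2⟩ : ((A.map g).map f ⊔ (B.map g).map f :
        Subgroup (Subgroup.center (Q ⧸ S))))
      rwa [Subgroup.orderOf_mk] at this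
    have h7 : PiNat π (orderOf (y ^ m)) := by
      have : orderOf (y ^ m) = orderOf (f y) := by rw [← hfy, Subgroup.orderOf_coe]
      rw [this]
      exact hcardP.of_dvd h6
    have h8 : orderOf (y ^ m) ∣ orderOf y := orderOf_pow_dvd m
    have h9 : orderOf (y ^ m) = 1 :=
      eq_one_of_pi_of_pi' (fun hc => h0 (Nat.eq_zero_of_zero_dvd (hc ▸ h8)))
        h7 (fun p pp hp => hy p pp (hp.trans h8))
    have h10 : y ^ m = 1 := orderOf_eq_one_iff.mp h9
    have h11 : orderOf y ∣ m := orderOf_dvd_of_pow_eq_one h10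
    have h12 : orderOf y = 1 := eq_one_of_pi_of_pi' h0 (hmpi.of_dvd h11) hy
    exact orderOf_eq_one_iff.mp h12
  have hYpi : PiNat π (Nat.card (Q ⧸ S)) := by
    intro p pp hp
    by_contra hpπ
    haveI := Fact.mk pp
    obtain ⟨y, hy⟩ := exists_prime_orderOf_dvd_card' p hp
    have h1 : y = 1 := htriv y (fun q qq hq => by
      rw [hy] at hq
      rw [(Nat.prime_dvd_prime_iff_eq qq pp).mp hq]
      exact hpπ)
    rw [h1, orderOf_one] at hy
    exact pp.one_lt.ne' hy.symm
  have hcard : Nat.card Q = Nat.card (Q ⧸ S) * Nat.card S :=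
    Subgroup.card_eq_card_quotient_mul_card_subgroup S
  rw [hcard]
  exact hYpi.mul hSpi

private lemma core_eq (π : Set ℕ) (X : Type*) [Group X] [Finite X] (A B : Subgroup X)
    (hAB : A ⊔ B = ⊤)
    (hNA : (piResidualIn π A).Normal) (hNB : (piResidualIn π B).Normal)
    (hA : piResidual π X ≤ Subgroup.normalizer (A : Set _)) (hB : piResidual π X ≤ Subgroup.normalizer (B : Set _)) :
    piResidual π X = piResidualIn π A ⊔ piResidualIn π B := by
  set N : Subgroup X := piResidualIn π A ⊔ piResidualIn π B with hN
  haveI hNn : N.Normal := by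
    haveI := hNA; haveI := hNB
    rw [hN]; infer_instance
  set g : X →* X ⧸ N := QuotientGroup.mk' N with hg
  have hgs : Function.Surjective g := QuotientGroup.mk'_surjective N
  haveI : Finite (X ⧸ N) := Quotient.finite _
  have himg : ∀ (C : Subgroup X), piResidualIn π C ≤ N → PiNat π (Nat.card (C.map g)) := by
    intro C hC
    set g0 : ↥C →* X ⧸ N := g.comp C.subtype with hg0
    have hrange : g0.range = C.map g := by
      rw [hg0, MonoidHom.range_comp, Subgroup.range_subtype]
    have hker : piResidual π ↥C ≤ g0.ker := by
      intro x hx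
      have h1 : (x : X) ∈ N := hC (Subgroup.mem_map_of_mem C.subtype hx)
      show g0 x = 1
      rw [hg0, MonoidHom.comp_apply, hg, QuotientGroup.mk'_apply, QuotientGroup.eq_one_iff]
      exact h1
    have hcard : Nat.card (C.map g) = g0.ker.index := by
      rw [← hrange, Subgroup.index_ker]
    rw [hcard]
    exact (piNat_index_piResidual ↥C).of_dvd (Subgroup.index_dvd_of_le hker)
  have hnor : ∀ (C : Subgroup X), piResidual π X ≤ Subgroup.normalizer (C : Set _) →
      piResidual π (X ⧸ N) ≤ Subgroup.normalizer ((C.map g) : Set _) := by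
    intro C hC
    rw [← map_piResidual g hgs]
    intro x hx
    obtain ⟨r, hr, rfl⟩ := Subgroup.mem_map.mp hx
    apply mem_normalizer_of_conj_mem
    intro s hs
    obtain ⟨c, hc, rfl⟩ := Subgroup.mem_map.mp hs
    have h1 : r * c * r⁻¹ ∈ C := (Subgroup.mem_normalizer_iff.mp (hC hr) c).mp hc
    exact Subgroup.mem_map.mpr ⟨r * c * r⁻¹, h1, by rw [map_mul, map_mul, map_inv]⟩
  have hsup2 : A.map g ⊔ B.map g = ⊤ := by
    rw [← Subgroup.map_sup, hAB, Subgroup.map_top_of_surjective _ hgs]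
  have hQpi : PiNat π (Nat.card (X ⧸ N)) :=
    quot_pi π (X ⧸ N) (A.map g) (B.map g) hsup2 (himg A le_sup_left) (himg B le_sup_right)
      (hnor A hA) (hnor B hB)
  have hNind : PiNat π N.index := by
    rw [Subgroup.index_eq_card]
    exact hQpi
  apply le_antisymm
  · exact piResidual_le hNn hNind
  · exact sup_le (piResidualIn_le A) (piResidualIn_le B)

private lemma piResidualIn_map_subtype {G : Type*} [Group G] [Finite G] (π : Set ℕ)
    {H K : Subgroup G} (h : H ≤ K) :
    (piResidualIn π (H.subgroupOf K)).map K.subtype = piResidualIn π H := by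
  have hcomp : K.subtype.comp (H.subgroupOf K).subtype =
      H.subtype.comp (Subgroup.subgroupOfEquivOfLe h).toMonoidHom := by
    ext x
    rfl
  calc (piResidualIn π (H.subgroupOf K)).map K.subtype
      = (piResidual π ↥(H.subgroupOf K)).map (K.subtype.comp (H.subgroupOf K).subtype) :=
        Subgroup.map_map _ _ _
    _ = ((piResidual π ↥(H.subgroupOf K)).map
          (Subgroup.subgroupOfEquivOfLe h).toMonoidHom).map H.subtype := by
        rw [hcomp, ← Subgroup.map_map]
    _ = (piResidual π ↥H).map H.subtype := by
        rw [map_piResidual (Subgroup.subgroupOfEquivOfLe h).toMonoidHom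
          (Subgroup.subgroupOfEquivOfLe h).surjective]

end DnormalSupHelpers

/-- Lemma 2.3: the join of two `N^π`-Dnormal subgroups is `N^π`-Dnormal. -/
theorem dnormal_sup (π : Set ℕ) (hπ : ∀ p ∈ π, p.Prime)
    (G : Type*) [Group G] [Finite G] (H K : Subgroup G)
    (hH : IsDnormal π H) (hK : IsDnormal π K) :
    IsDnormal π (H ⊔ K) := by
  by_cases hs : π.Subsingleton
  · have hHn : H.Normal := by
      rcases hH with ⟨_, h⟩ | ⟨h, _⟩
      · exact h
      · exact absurd hs h
    have hKn : K.Normal := by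
      rcases hK with ⟨_, h⟩ | ⟨h, _⟩
      · exact h
      · exact absurd hs h
    haveI := hHn; haveI := hKn
    exact Or.inl ⟨hs, inferInstance⟩
  · obtain ⟨-, hHn, hHnorm⟩ := hH.resolve_left (fun h => hs h.1)
    obtain ⟨-, hKn, hKnorm⟩ := hK.resolve_left (fun h => hs h.1)
    refine Or.inr ⟨hs, ?_, ?_⟩
    · -- normality of the π-residual of the join
      set X : Subgroup G := H ⊔ K with hX
      have hHle : H ≤ X := le_sup_left
      have hKle : K ≤ X := le_sup_right
      have htrA : (piResidualIn π (H.subgroupOf X)).map X.subtype = piResidualIn π H :=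
        piResidualIn_map_subtype π hHle
      have htrB : (piResidualIn π (K.subgroupOf X)).map X.subtype = piResidualIn π K :=
        piResidualIn_map_subtype π hKle
      have hPHle : piResidualIn π H ≤ X := (piResidualIn_le_self H).trans hHle
      have hPKle : piResidualIn π K ≤ X := (piResidualIn_le_self K).trans hKle
      have hEA : piResidualIn π (H.subgroupOf X) = (piResidualIn π H).subgroupOf X := by
        apply Subgroup.map_injective X.subtype_injective
        rw [htrA, Subgroup.subgroupOf_map_subtype]
        exact (inf_eq_left.mpr hPHle).symm
      have hEB : piResidualIn π (K.subgroupOf X) = (piResidualIn π K).subgroupOf X := by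
        apply Subgroup.map_injective X.subtype_injective
        rw [htrB, Subgroup.subgroupOf_map_subtype]
        exact (inf_eq_left.mpr hPKle).symm
      have hNA : (piResidualIn π (H.subgroupOf X)).Normal := by
        rw [hEA]; exact hHn.subgroupOf X
      have hNB : (piResidualIn π (K.subgroupOf X)).Normal := by
        rw [hEB]; exact hKn.subgroupOf X
      have hnorm' : ∀ (C : Subgroup G), C ≤ X → piResidual π G ≤ Subgroup.normalizer (C : Set _) →
          piResidual π ↥X ≤ Subgroup.normalizer ((C.subgroupOf X) : Set _) := by
        intro C hCle hCnorm x hx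
        have hxG : (x : G) ∈ piResidual π G :=
          piResidualIn_le X (Subgroup.mem_map_of_mem X.subtype hx)
        have hnx := Subgroup.mem_normalizer_iff.mp (hCnorm hxG)
        rw [Subgroup.mem_normalizer_iff]
        intro h
        rw [Subgroup.mem_subgroupOf, Subgroup.mem_subgroupOf]
        have := hnx (h : G)
        simpa using this
      have hAB : H.subgroupOf X ⊔ K.subgroupOf X = ⊤ := by
        rw [← Subgroup.subgroupOf_sup hHle hKle]
        exact Subgroup.subgroupOf_self X
      have hcore := core_eq π ↥X (H.subgroupOf X) (K.subgroupOf X) hAB hNA hNB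
        (hnorm' H hHle hHnorm) (hnorm' K hKle hKnorm)
      show (piResidualIn π X).Normal
      have hfinal : piResidualIn π X = piResidualIn π H ⊔ piResidualIn π K := by
        show (piResidual π ↥X).map X.subtype = _
        rw [hcore, Subgroup.map_sup, htrA, htrB]
      rw [hfinal]
      haveI := hHn; haveI := hKn
      infer_instance
    · intro x hx
      exact le_normalizer_sup H K (Subgroup.mem_inf.mpr ⟨hHnorm hx, hKnorm hx⟩)
end

section
/- Let π be a set of primes, G a finite group, and F an N^π-Fitting set of G. If H is an N^π-Dnormal subgroup of G, then the F-radical H_F (the join of all normal subgroups of H belonging to F) is N^π-Dnormal in G. -/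
section AuxLattice

variable {α : Type*} [CompleteLattice α]

lemma aux_sSup_mem_of_finite {s : Set α} (hfin : s.Finite) (hne : s.Nonempty)
    (hcl : ∀ a ∈ s, ∀ b ∈ s, a ⊔ b ∈ s) : sSup s ∈ s := by
  have htne : hfin.toFinset.Nonempty := by
    rwa [Set.Finite.toFinset_nonempty]
  have hmem : hfin.toFinset.sup' htne id ∈ s :=
    Finset.sup'_mem s hcl _ htne id (fun x hx => hfin.mem_toFinset.mp hx)
  have : sSup s = hfin.toFinset.sup' htne id := by
    apply le_antisymm
    · exact sSup_le fun a ha => Finset.le_sup' (f := id) (hfin.mem_toFinset.mpr ha)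
    · exact Finset.sup'_le _ _ fun a ha => le_sSup (hfin.mem_toFinset.mp ha)
  rwa [this]

lemma aux_sInf_mem_of_finite {s : Set α} (hfin : s.Finite) (hne : s.Nonempty)
    (hcl : ∀ a ∈ s, ∀ b ∈ s, a ⊓ b ∈ s) : sInf s ∈ s := by
  have htne : hfin.toFinset.Nonempty := by
    rwa [Set.Finite.toFinset_nonempty]
  have hmem : hfin.toFinset.inf' htne id ∈ s :=
    Finset.inf'_mem s hcl _ htne id (fun x hx => hfin.mem_toFinset.mp hx)
  have : sInf s = hfin.toFinset.inf' htne id := by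
    apply le_antisymm
    · exact Finset.le_inf' _ _ fun a ha => sInf_le (hfin.mem_toFinset.mp ha)
    · exact le_sInf fun a ha => Finset.inf'_le (f := id) (hfin.mem_toFinset.mpr ha)
  rwa [this]

end AuxLattice

section AuxConj

variable {G : Type*} [Group G]

open Subgroup

lemma aux_map_conj_eq_of_mem_normalizer {K : Subgroup G} {g : G} (h : g ∈ Subgroup.normalizer (K : Set G)) :
    K.map (MulAut.conj g).toMonoidHom = K := by
  rw [Subgroup.mem_normalizer_iff] at h
  ext x
  constructor
  · rintro ⟨y, hy, rfl⟩
    simpa using (h y).mp hy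
  · intro hx
    refine ⟨g⁻¹ * x * g, ?_, by simp [mul_assoc]⟩
    have h2 := (h (g⁻¹ * x * g)).mpr
    apply h2
    have : g * (g⁻¹ * x * g) * g⁻¹ = x := by group
    rwa [this]

lemma aux_mem_normalizer_of_map_conj {K : Subgroup G} {g : G}
    (h : K.map (MulAut.conj g).toMonoidHom = K) : g ∈ Subgroup.normalizer (K : Set G) := by
  rw [Subgroup.mem_normalizer_iff]
  intro n
  constructor
  · intro hn
    have h3 : g * n * g⁻¹ ∈ K.map (MulAut.conj g).toMonoidHom := ⟨n, hn, by simp⟩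
    rwa [h] at h3
  · intro hn
    have h3 : g * n * g⁻¹ ∈ K.map (MulAut.conj g).toMonoidHom := by rw [h]; exact hn
    obtain ⟨y, hy, hy2⟩ := h3
    simp only [MulEquiv.coe_toMonoidHom, MulAut.conj_apply] at hy2
    have hyn : y = n := mul_left_cancel (mul_right_cancel hy2)
    rwa [hyn] at hy

lemma aux_normal_of_forall_map_conj {K : Subgroup G}
    (h : ∀ g : G, K.map (MulAut.conj g).toMonoidHom = K) : K.Normal := by
  constructor
  intro n hn g
  have h3 : g * n * g⁻¹ ∈ K.map (MulAut.conj g).toMonoidHom := ⟨n, hn, by simp⟩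
  rwa [h g] at h3

end AuxConj

section AuxRes

open Subgroup

variable (π : Set ℕ)

def auxResSet (X : Type*) [Group X] : Set (Subgroup X) :=
  {N : Subgroup X | N.Normal ∧ ∀ p : ℕ, p.Prime → p ∣ N.index → p ∈ π}

lemma aux_piResidual_eq_sInf (X : Type*) [Group X] :
    piResidual π X = sInf (auxResSet π X) := by
  rw [sInf_eq_iInf]
  rfl

variable {X Y : Type*} [Group X] [Group Y] [Finite X] [Finite Y]

lemma aux_finite_subgroup : Finite (Subgroup X) :=
  Finite.of_injective (fun (K : Subgroup X) => (K : Set X)) SetLike.coe_injective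

lemma aux_piResidual_mem : piResidual π X ∈ auxResSet π X := by
  have : Finite (Subgroup X) := aux_finite_subgroup
  rw [aux_piResidual_eq_sInf]
  apply aux_sInf_mem_of_finite (Set.toFinite _)
  · exact ⟨⊤, ⟨(inferInstance : (⊤ : Subgroup X).Normal), fun p hp hd => absurd (Nat.dvd_one.mp (by simpa [Subgroup.index_top] using hd)) hp.ne_one⟩⟩
  · rintro N₁ ⟨hN₁n, hN₁i⟩ N₂ ⟨hN₂n, hN₂i⟩
    constructor
    · constructor
      intro n hn g
      exact ⟨hN₁n.conj_mem n hn.1 g, hN₂n.conj_mem n hn.2 g⟩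
    · intro p hp hd
      set φ : X →* (X ⧸ N₁) × (X ⧸ N₂) := (QuotientGroup.mk' N₁).prod (QuotientGroup.mk' N₂) with hφ
      have hker : φ.ker = N₁ ⊓ N₂ := by
        rw [hφ, MonoidHom.ker_prod, QuotientGroup.ker_mk', QuotientGroup.ker_mk']
      have hdvd : (N₁ ⊓ N₂).index ∣ N₁.index * N₂.index := by
        rw [← hker, Subgroup.index_ker]
        calc Nat.card φ.range ∣ Nat.card ((X ⧸ N₁) × (X ⧸ N₂)) :=
              Subgroup.card_subgroup_dvd_card _
          _ = N₁.index * N₂.index := by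
              rw [Nat.card_prod]; rfl
      rcases hp.dvd_mul.mp (hd.trans hdvd) with h1 | h1
      · exact hN₁i p hp h1
      · exact hN₂i p hp h1

lemma aux_map_piResidual_le (f : X →* Y) :
    (piResidual π X).map f ≤ piResidual π Y := by
  rw [show piResidual π Y = ⨅ N ∈ auxResSet π Y, N from rfl]
  refine le_iInf₂ fun N hN => ?_
  rw [Subgroup.map_le_iff_le_comap, aux_piResidual_eq_sInf]
  apply sInf_le
  haveI := hN.1
  refine ⟨hN.1.comap f, fun p hp hd => ?_⟩
  apply hN.2 p hp
  have hker : ((QuotientGroup.mk' N).comp f).ker = N.comap f := by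
    rw [← MonoidHom.comap_ker, QuotientGroup.ker_mk']
  have : (N.comap f).index ∣ N.index := by
    rw [← hker, Subgroup.index_ker]
    exact Subgroup.card_subgroup_dvd_card _
  exact hd.trans this

lemma aux_map_piResidual_equiv (e : X ≃* Y) :
    (piResidual π X).map e.toMonoidHom = piResidual π Y := by
  refine le_antisymm (aux_map_piResidual_le π _) ?_
  have h1 := aux_map_piResidual_le π e.symm.toMonoidHom
  have h2 := Subgroup.map_mono (f := e.toMonoidHom) h1
  rw [Subgroup.map_map] at h2
  have h3 : e.toMonoidHom.comp e.symm.toMonoidHom = MonoidHom.id Y := by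
    ext y; simp
  rwa [h3, Subgroup.map_id] at h2

end AuxRes
section AuxResIn

open Subgroup

variable (π : Set ℕ) {G : Type*} [Group G] [Finite G]

lemma aux_piResidualIn_le (K : Subgroup G) : piResidualIn π K ≤ K :=
  Subgroup.map_subtype_le _

lemma aux_piResidualIn_subgroupOf (K : Subgroup G) :
    (piResidualIn π K).subgroupOf K = piResidual π K := by
  rw [piResidualIn, Subgroup.subgroupOf, Subgroup.comap_map_eq_self_of_injective
    (Subgroup.subtype_injective K)]

lemma aux_piResidualIn_relindex (K : Subgroup G) :
    ∀ p : ℕ, p.Prime → p ∣ (piResidualIn π K).relIndex K → p ∈ π := by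
  intro p hp hd
  rw [Subgroup.relIndex, aux_piResidualIn_subgroupOf] at hd
  exact (aux_piResidual_mem π (X := K)).2 p hp hd

lemma aux_piResidualIn_mono {K L : Subgroup G} (h : K ≤ L) :
    piResidualIn π K ≤ piResidualIn π L := by
  rw [piResidualIn, piResidualIn, ← Subgroup.subtype_comp_inclusion h, ← Subgroup.map_map]
  exact Subgroup.map_mono (aux_map_piResidual_le π (Subgroup.inclusion h))

lemma aux_piResidualIn_map_equiv (e : G ≃* G) (K : Subgroup G) :
    (piResidualIn π K).map e.toMonoidHom = piResidualIn π (K.map e.toMonoidHom) := by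
  simp only [MulEquiv.toMonoidHom_eq_coe]
  rw [piResidualIn, piResidualIn, Subgroup.map_map,
    ← aux_map_piResidual_equiv π (e.subgroupMap K), Subgroup.map_map]
  congr 1

lemma aux_piResidualIn_map_conj (g : G) (K : Subgroup G) :
    (piResidualIn π K).map (MulAut.conj g).toMonoidHom
      = piResidualIn π (K.map (MulAut.conj g).toMonoidHom) :=
  aux_piResidualIn_map_equiv π (MulAut.conj g) K

lemma aux_piResidualIn_le_of {X K : Subgroup G} (hXK : X ≤ K)
    (hnorm : (X.subgroupOf K).Normal)
    (hidx : ∀ p : ℕ, p.Prime → p ∣ X.relIndex K → p ∈ π) :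
    piResidualIn π K ≤ X := by
  have h1 : piResidual π K ≤ X.subgroupOf K := by
    rw [aux_piResidual_eq_sInf]
    exact sInf_le ⟨hnorm, hidx⟩
  calc piResidualIn π K = (piResidual π K).map K.subtype := rfl
    _ ≤ (X.subgroupOf K).map K.subtype := Subgroup.map_mono h1
    _ = X ⊓ K := Subgroup.subgroupOf_map_subtype X K
    _ ≤ X := inf_le_left

lemma aux_piResidualIn_idem (K : Subgroup G) :
    piResidualIn π (piResidualIn π K) = piResidualIn π K := by
  refine le_antisymm (aux_piResidualIn_mono π (aux_piResidualIn_le π K)) ?_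
  set T := piResidualIn π (piResidualIn π K) with hT
  have hTO : T ≤ piResidualIn π K := aux_piResidualIn_le π _
  have hTK : T ≤ K := hTO.trans (aux_piResidualIn_le π K)
  apply aux_piResidualIn_le_of π hTK
  · rw [Subgroup.normal_subgroupOf_iff hTK]
    intro h k hh hk
    have hmapK : K.map (MulAut.conj k).toMonoidHom = K :=
      aux_map_conj_eq_of_mem_normalizer (Subgroup.le_normalizer hk)
    have hmapT : T.map (MulAut.conj k).toMonoidHom = T := by
      rw [hT, aux_piResidualIn_map_conj, aux_piResidualIn_map_conj, hmapK]
    have : k * h * k⁻¹ ∈ T.map (MulAut.conj k).toMonoidHom := ⟨h, hh, by simp⟩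
    rwa [hmapT] at this
  · intro p hp hd
    rw [← Subgroup.relIndex_mul_relIndex T (piResidualIn π K) K hTO
      (aux_piResidualIn_le π K)] at hd
    rcases hp.dvd_mul.mp hd with h1 | h1
    · exact aux_piResidualIn_relindex π _ p hp h1
    · exact aux_piResidualIn_relindex π _ p hp h1

lemma aux_piResidualIn_sandwich {M K : Subgroup G} (h1 : piResidualIn π K ≤ M)
    (h2 : M ≤ K) : piResidualIn π M = piResidualIn π K := by
  refine le_antisymm (aux_piResidualIn_mono π h2) ?_
  conv_lhs => rw [← aux_piResidualIn_idem π K]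
  exact aux_piResidualIn_mono π h1

lemma aux_relindex_dvd {X K L : Subgroup G} (hKL : K ≤ L) (hXL : X ≤ L)
    (hXnorm : (X.subgroupOf L).Normal) : (X ⊓ K).relIndex K ∣ X.relIndex L := by
  haveI := hXnorm
  set φ : K →* L ⧸ (X.subgroupOf L) :=
    (QuotientGroup.mk' (X.subgroupOf L)).comp (Subgroup.inclusion hKL) with hφ
  have hker : φ.ker = (X ⊓ K).subgroupOf K := by
    ext x
    simp only [hφ, MonoidHom.mem_ker, MonoidHom.comp_apply, QuotientGroup.mk'_apply,
      QuotientGroup.eq_one_iff, Subgroup.mem_subgroupOf, Subgroup.mem_inf]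
    constructor
    · intro hx; exact ⟨hx, x.2⟩
    · intro hx; exact hx.1
  have : ((X ⊓ K).subgroupOf K).index = Nat.card φ.range := by
    rw [← hker, Subgroup.index_ker]
  rw [Subgroup.relIndex, this, Subgroup.relIndex]
  have h2 : (X.subgroupOf L).index = Nat.card (L ⧸ X.subgroupOf L) := rfl
  rw [h2]
  exact Subgroup.card_subgroup_dvd_card _

end AuxResIn
section AuxDnormal

open Subgroup

variable (π : Set ℕ)

lemma aux_isDnormal_of_normal {A : Type*} [Group A] [Finite A] {Z : Subgroup A}
    (hZ : Z.Normal) : IsDnormal π Z := by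
  by_cases hs : π.Subsingleton
  · exact Or.inl ⟨hs, hZ⟩
  · refine Or.inr ⟨hs, ?_, ?_⟩
    · apply aux_normal_of_forall_map_conj
      intro g
      rw [aux_piResidualIn_map_conj, aux_map_conj_eq_of_mem_normalizer
        (by rw [Subgroup.normalizer_eq_top_iff.mpr hZ]; trivial)]
    · rw [Subgroup.normalizer_eq_top_iff.mpr hZ]; exact le_top

lemma aux_isDsubnormal_of_normal {A : Type*} [Group A] [Finite A] {Z : Subgroup A}
    (hZ : Z.Normal) : IsDsubnormal π Z := by
  refine ⟨1, ![Z, ⊤], by simp, by simp [Fin.last], ?_⟩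
  intro i
  have hi : i = 0 := Subsingleton.elim i 0
  subst hi
  have h0 : Fin.castSucc (0 : Fin 1) = (0 : Fin 2) := rfl
  have h1 : Fin.succ (0 : Fin 1) = (1 : Fin 2) := rfl
  rw [h0, h1]
  constructor
  · show Z ≤ (⊤ : Subgroup A)
    exact le_top
  · show IsDnormal π (Z.subgroupOf ⊤)
    exact aux_isDnormal_of_normal π (hZ.comap _)

lemma aux_subgroupOf_normal_iff_conj {G : Type*} [Group G] {S K : Subgroup G} (hSK : S ≤ K) :
    (S.subgroupOf K).Normal ↔ ∀ k ∈ K, S.map (MulAut.conj k).toMonoidHom = S := by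
  rw [Subgroup.normal_subgroupOf_iff hSK]
  constructor
  · intro h k hk
    ext x
    constructor
    · rintro ⟨s, hs, rfl⟩
      simpa using h s k hs hk
    · intro hx
      refine ⟨k⁻¹ * x * k, ?_, by simp; group⟩
      have := h x k⁻¹ hx (inv_mem hk)
      simpa [mul_assoc] using this
  · intro h s k hs hk
    have : k * s * k⁻¹ ∈ S.map (MulAut.conj k).toMonoidHom := ⟨s, hs, by simp⟩
    rwa [h k hk] at this

lemma aux_map_conj_cancel {G : Type*} [Group G] (g : G) (X : Subgroup G) :
    (X.map (MulAut.conj g).toMonoidHom).map (MulAut.conj g⁻¹).toMonoidHom = X := by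
  rw [Subgroup.map_map]
  have h : (MulAut.conj g⁻¹).toMonoidHom.comp (MulAut.conj g).toMonoidHom
      = MonoidHom.id G := by
    ext x
    simp only [MonoidHom.comp_apply, MulEquiv.coe_toMonoidHom, MulAut.conj_apply,
      MonoidHom.id_apply]
    group
  rw [h, Subgroup.map_id]

lemma aux_map_conj_cancel' {G : Type*} [Group G] (g : G) (X : Subgroup G) :
    (X.map (MulAut.conj g⁻¹).toMonoidHom).map (MulAut.conj g).toMonoidHom = X := by
  have := aux_map_conj_cancel g⁻¹ X
  rwa [inv_inv] at this

end AuxDnormal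

section AuxRadical

open Subgroup

variable (π : Set ℕ) {G : Type*} [Group G] [Finite G] {F : Set (Subgroup G)}

def auxRadSet (F : Set (Subgroup G)) (K : Subgroup G) : Set (Subgroup G) :=
  {S | S ∈ F ∧ S ≤ K ∧ (S.subgroupOf K).Normal}

lemma aux_radical_eq_sSup (F : Set (Subgroup G)) (K : Subgroup G) :
    fittingRadical F K = sSup (auxRadSet F K) := by
  rw [sSup_eq_iSup]; rfl

lemma aux_le_radical {S K : Subgroup G} (h : S ∈ auxRadSet F K) :
    S ≤ fittingRadical F K := by
  rw [aux_radical_eq_sSup]; exact le_sSup h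

lemma aux_bot_mem (hF : IsNPiFittingSet π F) : (⊥ : Subgroup G) ∈ F := by
  obtain ⟨S₀, hS₀⟩ := hF.1
  refine hF.2.1 S₀ hS₀ ⊥ bot_le ?_
  exact aux_isDsubnormal_of_normal π (Subgroup.Normal.comap inferInstance _)

lemma aux_radical_mem (hF : IsNPiFittingSet π F) (K : Subgroup G) :
    fittingRadical F K ∈ auxRadSet F K := by
  have : Finite (Subgroup G) := aux_finite_subgroup
  rw [aux_radical_eq_sSup]
  apply aux_sSup_mem_of_finite (Set.toFinite _)
  · exact ⟨⊥, aux_bot_mem π hF, bot_le, Subgroup.Normal.comap inferInstance _⟩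
  · rintro S ⟨hSF, hSK, hSn⟩ T ⟨hTF, hTK, hTn⟩
    have hSTK : S ⊔ T ≤ K := sup_le hSK hTK
    have hSconj := (aux_subgroupOf_normal_iff_conj hSK).mp hSn
    have hTconj := (aux_subgroupOf_normal_iff_conj hTK).mp hTn
    refine ⟨?_, hSTK, ?_⟩
    · refine hF.2.2.1 S hSF T hTF ?_ ?_
      · refine aux_isDnormal_of_normal π ?_
        exact (aux_subgroupOf_normal_iff_conj le_sup_left).mpr
          fun k hk => hSconj k (hSTK hk)
      · refine aux_isDnormal_of_normal π ?_
        exact (aux_subgroupOf_normal_iff_conj le_sup_right).mpr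
          fun k hk => hTconj k (hSTK hk)
    · refine (aux_subgroupOf_normal_iff_conj hSTK).mpr fun k hk => ?_
      rw [Subgroup.map_sup, hSconj k hk, hTconj k hk]

lemma aux_map_conj_radical_le (hF : IsNPiFittingSet π F) (g : G) (K : Subgroup G) :
    (fittingRadical F K).map (MulAut.conj g).toMonoidHom
      ≤ fittingRadical F (K.map (MulAut.conj g).toMonoidHom) := by
  rw [fittingRadical, (Subgroup.gc_map_comap _).l_iSup]
  refine iSup_le fun S => ?_
  rw [(Subgroup.gc_map_comap _).l_iSup]
  refine iSup_le fun hS => ?_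
  obtain ⟨hSF, hSK, hSn⟩ := hS
  refine aux_le_radical ⟨hF.2.2.2 S hSF g, Subgroup.map_mono hSK, ?_⟩
  refine (aux_subgroupOf_normal_iff_conj (Subgroup.map_mono hSK)).mpr ?_
  rintro k' ⟨k, hk, rfl⟩
  have hcomm : (MulAut.conj ((MulAut.conj g).toMonoidHom k)).toMonoidHom.comp
      (MulAut.conj g).toMonoidHom
      = (MulAut.conj g).toMonoidHom.comp (MulAut.conj k).toMonoidHom := by
    ext x
    simp only [MonoidHom.comp_apply, MulEquiv.coe_toMonoidHom, MulAut.conj_apply]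
    group
  rw [Subgroup.map_map, hcomm, ← Subgroup.map_map,
    (aux_subgroupOf_normal_iff_conj hSK).mp hSn k hk]

lemma aux_map_conj_radical (hF : IsNPiFittingSet π F) (g : G) (K : Subgroup G) :
    (fittingRadical F K).map (MulAut.conj g).toMonoidHom
      = fittingRadical F (K.map (MulAut.conj g).toMonoidHom) := by
  refine le_antisymm (aux_map_conj_radical_le π hF g K) ?_
  have h1 := aux_map_conj_radical_le π hF g⁻¹ (K.map (MulAut.conj g).toMonoidHom)
  rw [aux_map_conj_cancel] at h1
  have h2 := Subgroup.map_mono (f := (MulAut.conj g).toMonoidHom) h1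
  rwa [aux_map_conj_cancel'] at h2

end AuxRadical

/-- Lemma 2.4: if `F` is an `N^π`-Fitting set of `G` and `H` is `N^π`-Dnormal in `G`,
then the `F`-radical `H_F` is `N^π`-Dnormal in `G`. -/
theorem dnormal_fittingRadical (π : Set ℕ) (hπ : ∀ p ∈ π, p.Prime)
    (G : Type*) [Group G] [Finite G] (F : Set (Subgroup G))
    (hF : IsNPiFittingSet π F) (H : Subgroup G) (h : IsDnormal π H) :
    IsDnormal π (fittingRadical F H) := by
  obtain ⟨hRF, hRH, hRn⟩ := aux_radical_mem π hF H
  rcases h with ⟨hs, hHnorm⟩ | ⟨hs, hDnorm, hOG⟩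
  · left
    refine ⟨hs, ?_⟩
    apply aux_normal_of_forall_map_conj
    intro g
    rw [aux_map_conj_radical π hF, aux_map_conj_eq_of_mem_normalizer
      (by rw [Subgroup.normalizer_eq_top_iff.mpr hHnorm]; trivial)]
  · right
    set D := piResidualIn π H with hD
    have hDH : D ≤ H := aux_piResidualIn_le π H
    have hDG : ∀ g : G, D.map (MulAut.conj g).toMonoidHom = D := fun g =>
      aux_map_conj_eq_of_mem_normalizer
        (by rw [Subgroup.normalizer_eq_top_iff.mpr hDnorm]; trivial)
    set E := fittingRadical F D with hE
    obtain ⟨hEF, hED, hEn⟩ := aux_radical_mem π hF D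
    have hEG : ∀ g : G, E.map (MulAut.conj g).toMonoidHom = E := fun g => by
      rw [hE, aux_map_conj_radical π hF (K := D), ← hE, hDG]
    have hEH : E ≤ H := hED.trans hDH
    have hER : E ≤ fittingRadical F H := aux_le_radical
      ⟨hEF, hEH, (aux_subgroupOf_normal_iff_conj hEH).mpr fun k _ => hEG k⟩
    set R := fittingRadical F H with hR
    have hRconj : ∀ k ∈ H, R.map (MulAut.conj k).toMonoidHom = R :=
      (aux_subgroupOf_normal_iff_conj hRH).mp hRn
    have hinj : ∀ k : G, Function.Injective ⇑(MulAut.conj k).toMonoidHom :=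
      fun k => (MulAut.conj k).injective
    have hMn : ((R ⊓ D).subgroupOf R).Normal := by
      refine (aux_subgroupOf_normal_iff_conj inf_le_left).mpr fun k hk => ?_
      rw [Subgroup.map_inf _ _ _ (hinj k), hRconj k (hRH hk), hDG k]
    have hORD : piResidualIn π R ≤ R ⊓ D := by
      apply aux_piResidualIn_le_of π inf_le_left hMn
      intro p hp hd
      have hdvd : (R ⊓ D).relIndex R ∣ D.relIndex H := by
        have := aux_relindex_dvd (X := D) (K := R) (L := H) hRH hDH
          ((aux_subgroupOf_normal_iff_conj hDH).mpr fun k _ => hDG k)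
        rwa [inf_comm] at this
      exact aux_piResidualIn_relindex π H p hp (hd.trans hdvd)
    have hMF : R ⊓ D ∈ F := hF.2.1 R hRF (R ⊓ D) inf_le_left
      (aux_isDsubnormal_of_normal π hMn)
    have hME : R ⊓ D ≤ E := aux_le_radical ⟨hMF, inf_le_right,
      (aux_subgroupOf_normal_iff_conj inf_le_right).mpr fun k hk => by
        rw [Subgroup.map_inf _ _ _ (hinj k), hRconj k (hDH hk), hDG k]⟩
    have hkey : piResidualIn π E = piResidualIn π R :=
      aux_piResidualIn_sandwich π (hORD.trans hME) hER
    refine ⟨hs, ?_, ?_⟩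
    · apply aux_normal_of_forall_map_conj
      intro g
      rw [← hkey, aux_piResidualIn_map_conj, hEG g]
    · intro g hg
      exact aux_mem_normalizer_of_map_conj (by
        rw [hR, aux_map_conj_radical π hF, aux_map_conj_eq_of_mem_normalizer (hOG hg)])
end
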